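/- Let n be a real number with n ≥ 2x and x ≥ 12, and f(t) = t^2 * (1 + ln(n/t)). Then 2*f(x) ≤ f(x-1) + f(x+1), i.e., f is midpoint-convex at integer-spaced points in this regime. -/

import Mathlib

set_option maxHeartbeats 1000000

/-- For `0 < a < b`, `log b - log a ≤ (b-a)/a`. -/
lemma log_diff_le_aux {a b : ℝ} (ha : 0 < a) (hab : a ≤ b) :
    Real.log b - Real.log a ≤ (b - a) / a := by
  have hb : 0 < b := lt_of_lt_of_le ha hab
  have h := Real.log_le_sub_one_of_pos (show 0 < b / a from div_pos hb ha)
  rw [Real.log_div hb.ne' ha.ne'] at h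
  have : b / a - 1 = (b - a) / a := by field_simp
  linarith [this ▸ h]

/-- For `0 < a < b`, `(b-a)/b ≤ log b - log a`. -/
lemma log_diff_ge_aux {a b : ℝ} (ha : 0 < a) (hab : a ≤ b) :
    (b - a) / b ≤ Real.log b - Real.log a := by
  have hb : 0 < b := lt_of_lt_of_le ha hab
  have h := Real.log_le_sub_one_of_pos (show 0 < a / b from div_pos ha hb)
  rw [Real.log_div ha.ne' hb.ne'] at h
  have : a / b - 1 = -((b - a) / b) := by field_simp; ring
  linarith [this ▸ h]

/-- Midpoint convexity of `f` at integer-spaced points: `2 f x ≤ f (x-1) + f (x+1)`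
for `x ≥ 12` and `n ≥ 2x`. -/
theorem f_midpoint_convex (n x : ℝ) (hx : 12 ≤ x) (hn : 2 * x ≤ n) (f : ℝ → ℝ)
    (hf : ∀ t : ℝ, f t = t ^ 2 * (1 + Real.log (n / t))) :
    2 * f x ≤ f (x - 1) + f (x + 1) := by
  have hx0 : (0:ℝ) < x := by linarith
  have hxm : (0:ℝ) < x - 1 := by linarith
  have hxp : (0:ℝ) < x + 1 := by linarith
  have hn0 : (0:ℝ) < n := by linarith
  rw [hf, hf, hf, Real.log_div hn0.ne' hx0.ne', Real.log_div hn0.ne' hxm.ne',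
    Real.log_div hn0.ne' hxp.ne']
  -- upper bound for log (x+1) : three-point split
  have p1 := log_diff_le_aux hx0 (show x ≤ x + 1/3 by linarith)
  have p2 := log_diff_le_aux (show (0:ℝ) < x + 1/3 by linarith)
    (show x + 1/3 ≤ x + 2/3 by linarith)
  have p3 := log_diff_le_aux (show (0:ℝ) < x + 2/3 by linarith)
    (show x + 2/3 ≤ x + 1 by linarith)
  have q1 := log_diff_ge_aux hxm (show x - 1 ≤ x - 2/3 by linarith)
  have q2 := log_diff_ge_aux (show (0:ℝ) < x - 2/3 by linarith)
    (show x - 2/3 ≤ x - 1/3 by linarith)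
  have q3 := log_diff_ge_aux (show (0:ℝ) < x - 1/3 by linarith)
    (show x - 1/3 ≤ x by linarith)
  -- simplify the fractional bounds
  have e1 : (x + 1/3 - x) / x = 1/(3*x) := by field_simp; ring
  have e2 : (x + 2/3 - (x + 1/3)) / (x + 1/3) = 1/(3*x+1) := by
    rw [div_eq_div_iff (by linarith) (by linarith)]; ring
  have e3 : (x + 1 - (x + 2/3)) / (x + 2/3) = 1/(3*x+2) := by
    rw [div_eq_div_iff (by linarith) (by linarith)]; ring
  have e4 : (x - 2/3 - (x - 1)) / (x - 2/3) = 1/(3*x-2) := by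
    rw [div_eq_div_iff (by linarith) (by linarith)]; ring
  have e5 : (x - 1/3 - (x - 2/3)) / (x - 1/3) = 1/(3*x-1) := by
    rw [div_eq_div_iff (by linarith) (by linarith)]; ring
  have e6 : (x - (x - 1/3)) / x = 1/(3*x) := by
    rw [div_eq_div_iff (by linarith) (by linarith)]; ring
  rw [e1] at p1; rw [e2] at p2; rw [e3] at p3
  rw [e4] at q1; rw [e5] at q2; rw [e6] at q3
  have hSp : Real.log (x+1) ≤ Real.log x + (1/(3*x) + 1/(3*x+1) + 1/(3*x+2)) := by
    linarith
  have hSm : Real.log (x-1) ≤ Real.log x - (1/(3*x) + 1/(3*x-1) + 1/(3*x-2)) := by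
    linarith
  -- log n ≥ log 2 + log x
  have hlogn : Real.log 2 + Real.log x ≤ Real.log n := by
    have h2x : Real.log (2*x) ≤ Real.log n :=
      (Real.log_le_log_iff (by linarith) hn0).mpr hn
    rw [Real.log_mul (by norm_num) hx0.ne'] at h2x
    exact h2x
  have hlog2 : (0.6931:ℝ) ≤ Real.log 2 := by
    linarith [Real.log_two_gt_d9]
  -- the key rational inequality
  have d1 : (0:ℝ) < 3*x - 2 := by linarith
  have d2 : (0:ℝ) < 3*x - 1 := by linarith
  have d3 : (0:ℝ) < 3*x := by linarith
  have d4 : (0:ℝ) < 3*x + 1 := by linarith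
  have d5 : (0:ℝ) < 3*x + 2 := by linarith
  have f1 : (x+1)^2 * (1/(3*x)) = x/3 + 2/3 + 1/(3*x) := by
    field_simp; ring
  have f2 : (x+1)^2 * (1/(3*x+1)) = x/3 + 5/9 + (4/9) * (1/(3*x+1)) := by
    field_simp; ring
  have f3 : (x+1)^2 * (1/(3*x+2)) = x/3 + 4/9 + (1/9) * (1/(3*x+2)) := by
    field_simp; ring
  have f4 : (x-1)^2 * (1/(3*x)) = x/3 - 2/3 + 1/(3*x) := by
    field_simp; ring
  have f5 : (x-1)^2 * (1/(3*x-1)) = x/3 - 5/9 + (4/9) * (1/(3*x-1)) := by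
    linear_combination (3*x-5)/9 * mul_one_div_cancel d2.ne'
  have f6 : (x-1)^2 * (1/(3*x-2)) = x/3 - 4/9 + (1/9) * (1/(3*x-2)) := by
    linear_combination (3*x-4)/9 * mul_one_div_cancel d1.ne'
  have i1 : 1/(3*x+2) ≤ 1/(3*x-2) := by
    apply one_div_le_one_div_of_le d1; linarith
  have i2 : 1/(3*x+1) ≤ 1/(3*x-1) := by
    apply one_div_le_one_div_of_le d2; linarith
  have key : (x+1)^2 * (1/(3*x) + 1/(3*x+1) + 1/(3*x+2))
      - (x-1)^2 * (1/(3*x) + 1/(3*x-1) + 1/(3*x-2)) ≤ 10/3 := by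
    have ex1 : (x+1)^2 * (1/(3*x) + 1/(3*x+1) + 1/(3*x+2))
        = (x+1)^2 * (1/(3*x)) + (x+1)^2 * (1/(3*x+1)) + (x+1)^2 * (1/(3*x+2)) := by
      ring
    have ex2 : (x-1)^2 * (1/(3*x) + 1/(3*x-1) + 1/(3*x-2))
        = (x-1)^2 * (1/(3*x)) + (x-1)^2 * (1/(3*x-1)) + (x-1)^2 * (1/(3*x-2)) := by
      ring
    rw [ex1, ex2, f1, f2, f3, f4, f5, f6]
    linarith
  -- multiply the log bounds by the nonnegative squares
  have m1 : (x-1)^2 * (1 + (Real.log n - Real.log x)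
        + (1/(3*x) + 1/(3*x-1) + 1/(3*x-2)))
      ≤ (x-1)^2 * (1 + (Real.log n - Real.log (x-1))) :=
    mul_le_mul_of_nonneg_left (by linarith) (sq_nonneg _)
  have m2 : (x+1)^2 * (1 + (Real.log n - Real.log x)
        - (1/(3*x) + 1/(3*x+1) + 1/(3*x+2)))
      ≤ (x+1)^2 * (1 + (Real.log n - Real.log (x+1))) :=
    mul_le_mul_of_nonneg_left (by linarith) (sq_nonneg _)
  have rid : (x-1)^2 * (1 + (Real.log n - Real.log x)
        + (1/(3*x) + 1/(3*x-1) + 1/(3*x-2)))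
      + (x+1)^2 * (1 + (Real.log n - Real.log x)
        - (1/(3*x) + 1/(3*x+1) + 1/(3*x+2)))
      = 2 * (x^2 * (1 + (Real.log n - Real.log x)))
        + 2 * (1 + (Real.log n - Real.log x))
        - ((x+1)^2 * (1/(3*x) + 1/(3*x+1) + 1/(3*x+2))
          - (x-1)^2 * (1/(3*x) + 1/(3*x-1) + 1/(3*x-2))) := by
    ring
  linarith
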